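/- The greedy strategy is the unique minimizing Shuffler strategy: a Shuffler strategy S satisfies f(d,S) = min_{S'} f(d,S') for all n-vectors d (and all n) if and only if S(d) has the uniform distribution on supp(d) for every nonzero n-vector d. -/

import Mathlib

open Finset

abbrev Deck (n : ℕ) := Fin n → ℕ
abbrev Strat (n : ℕ) := Deck n → Fin n → ℝ

/-- Remove one copy of card type `j` from the deck. -/
def Deck.sub {n : ℕ} (d : Deck n) (j : Fin n) : Deck n :=
  fun i => if i = j then d i - 1 else d i

/-- `p` is a probability distribution on `Fin n`. -/
def IsDist {n : ℕ} (p : Fin n → ℝ) : Prop :=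
  (∀ i, 0 ≤ p i) ∧ ∑ i, p i = 1

/-- A Guesser strategy outputs a distribution on card types for each nonzero deck. -/
def IsGuesser {n : ℕ} (G : Strat n) : Prop :=
  ∀ d : Deck n, d ≠ 0 → IsDist (G d)

/-- A Shuffler strategy outputs a distribution supported on the support of the deck. -/
def IsShuffler {n : ℕ} (S : Strat n) : Prop :=
  ∀ d : Deck n, d ≠ 0 → IsDist (S d) ∧ ∀ i, S d i ≠ 0 → d i ≠ 0

/-- Expected score of the game, computed with fuel `N` (the number of cards). -/
def scoreAux {n : ℕ} (G S : Strat n) : ℕ → Deck n → ℝ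
  | 0, _ => 0
  | N + 1, d => ∑ j ∈ Finset.univ.filter (fun j => d j ≠ 0),
      S d j * (G d j + scoreAux G S N (d.sub j))

/-- The expected score `E[C(d,G,S)]`. -/
noncomputable def score {n : ℕ} (G S : Strat n) (d : Deck n) : ℝ :=
  scoreAux G S (∑ i, d i) d

/-- `f(d,S)`: maximum expected score over all Guesser strategies. -/
noncomputable def fval {n : ℕ} (S : Strat n) (d : Deck n) : ℝ :=
  sSup {x | ∃ G, IsGuesser G ∧ score G S d = x}

/-- `F(d,S)`: minimum expected score over all Guesser strategies. -/
noncomputable def Fval {n : ℕ} (S : Strat n) (d : Deck n) : ℝ :=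
  sInf {x | ∃ G, IsGuesser G ∧ score G S d = x}

/-- `f(d) = min_S f(d,S)`. -/
noncomputable def fopt {n : ℕ} (d : Deck n) : ℝ :=
  sInf {x | ∃ S, IsShuffler S ∧ fval S d = x}

/-- `F(d) = max_S F(d,S)`. -/
noncomputable def Fopt {n : ℕ} (d : Deck n) : ℝ :=
  sSup {x | ∃ S, IsShuffler S ∧ Fval S d = x}

/-- The greedy Shuffler strategy: uniform on the support of the deck. -/
noncomputable def greedy {n : ℕ} : Strat n :=
  fun d i => if d i ≠ 0 then ((Finset.univ.filter fun j => d j ≠ 0).card : ℝ)⁻¹ else 0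

namespace CG
variable {n : ℕ}

def supp (d : Deck n) : Finset (Fin n) := Finset.univ.filter fun j => d j ≠ 0

lemma mem_supp {d : Deck n} {j : Fin n} : j ∈ supp d ↔ d j ≠ 0 := by simp [supp]

lemma supp_nonempty {d : Deck n} (hd : d ≠ 0) : (supp d).Nonempty := by
  rcases Function.ne_iff.1 hd with ⟨i, hi⟩
  exact ⟨i, mem_supp.2 hi⟩

lemma ne_zero_of_supp {d : Deck n} (h : (supp d).Nonempty) : d ≠ 0 := by
  rcases h with ⟨i, hi⟩
  intro h0; rw [h0] at hi; exact (mem_supp.1 hi) rfl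

lemma supp_eq_empty {d : Deck n} (hd : d = 0) : supp d = ∅ := by
  subst hd; ext i; simp [supp]

lemma eq_zero_of_sum {d : Deck n} (h : ∑ i, d i = 0) : d = 0 := by
  funext i
  exact Finset.sum_eq_zero_iff.1 h i (Finset.mem_univ i)

lemma sum_sub_add_one {d : Deck n} {j : Fin n} (hj : d j ≠ 0) :
    (∑ i, (d.sub j) i) + 1 = ∑ i, d i := by
  rw [← Finset.sum_erase_add Finset.univ _ (Finset.mem_univ j),
      ← Finset.sum_erase_add Finset.univ d (Finset.mem_univ j)]
  have h1 : ∀ i ∈ Finset.univ.erase j, (d.sub j) i = d i := by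
    intro i hi; simp [Deck.sub, (Finset.mem_erase.1 hi).1]
  have hs : ∑ i ∈ Finset.univ.erase j, (d.sub j) i = ∑ i ∈ Finset.univ.erase j, d i :=
    Finset.sum_congr rfl h1
  have h2 : (d.sub j) j = d j - 1 := by simp [Deck.sub]
  rw [hs, h2]; omega

lemma sub_comm (d : Deck n) (i j : Fin n) : (d.sub i).sub j = (d.sub j).sub i := by
  funext x
  simp only [Deck.sub]
  split_ifs <;> subst_vars <;> simp_all

noncomputable def hval (S : Strat n) : ℕ → Deck n → ℝ
  | 0, _ => 0
  | N+1, d =>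
    if hd : (supp d).Nonempty then
      (supp d).sup' hd (S d) + ∑ j ∈ supp d, S d j * hval S N (d.sub j)
    else 0

lemma hval_zero (S : Strat n) (N : ℕ) : hval S N (0 : Deck n) = 0 := by
  cases N with
  | zero => rfl
  | succ N =>
    have : ¬ (supp (0 : Deck n)).Nonempty := by
      simp [supp_eq_empty rfl]
    simp [hval, this]

lemma hval_fuel (S : Strat n) : ∀ N M (d : Deck n), ∑ i, d i ≤ N → ∑ i, d i ≤ M →
    hval S N d = hval S M d := by
  intro N
  induction N with
  | zero =>
    intro M d h _
    rw [eq_zero_of_sum (Nat.le_zero.1 h), hval_zero, hval_zero]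
  | succ N ih =>
    intro M d hN hM
    cases M with
    | zero =>
      rw [eq_zero_of_sum (Nat.le_zero.1 hM), hval_zero, hval_zero]
    | succ M =>
      by_cases hd : (supp d).Nonempty
      · rw [hval, hval, dif_pos hd, dif_pos hd]
        congr 1
        refine Finset.sum_congr rfl fun j hj => ?_
        have hsub := sum_sub_add_one (mem_supp.1 hj)
        rw [ih M (d.sub j) (by omega) (by omega)]
      · rw [hval, hval, dif_neg hd, dif_neg hd]

noncomputable def g (d : Deck n) : ℝ := hval greedy (∑ i, d i) d

lemma g_zero : g (0 : Deck n) = 0 := hval_zero _ _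

lemma greedy_apply {d : Deck n} {j : Fin n} (hj : j ∈ supp d) :
    greedy d j = ((supp d).card : ℝ)⁻¹ := by
  rw [greedy, if_pos (mem_supp.1 hj)]; rfl

lemma greedy_shuffler : IsShuffler (greedy (n := n)) := by
  intro d hd
  have hc : ((supp d).card : ℝ) ≠ 0 := by
    have := Finset.card_pos.2 (supp_nonempty hd)
    positivity
  refine ⟨⟨fun i => ?_, ?_⟩, fun i hi => ?_⟩
  · rw [greedy]
    split
    · positivity
    · exact le_rfl
  · have h1 : ∀ i ∈ Finset.univ, greedy d i =
        if d i ≠ 0 then ((supp d).card : ℝ)⁻¹ else 0 := fun i _ => rfl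
    rw [Finset.sum_congr rfl h1, ← Finset.sum_filter]
    have h2 : Finset.univ.filter (fun i => d i ≠ 0) = supp d := rfl
    rw [h2, Finset.sum_const, nsmul_eq_mul]
    field_simp
  · by_contra h
    rw [greedy, if_neg (by simp [h])] at hi
    exact hi rfl

lemma hval_nonneg {S : Strat n} (hS : IsShuffler S) : ∀ N (d : Deck n), 0 ≤ hval S N d := by
  intro N
  induction N with
  | zero => intro d; exact le_rfl
  | succ N ih =>
    intro d
    by_cases hd : (supp d).Nonempty
    · rw [hval, dif_pos hd]
      have hdne := ne_zero_of_supp hd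
      obtain ⟨j, hj⟩ := hd
      have h1 : 0 ≤ (supp d).sup' ⟨j, hj⟩ (S d) :=
        le_trans ((hS d hdne).1.1 j) (Finset.le_sup' _ hj)
      have h2 : 0 ≤ ∑ j ∈ supp d, S d j * hval S N (d.sub j) :=
        Finset.sum_nonneg fun i _ => mul_nonneg ((hS d hdne).1.1 i) (ih _)
      linarith
    · rw [hval, dif_neg hd]

lemma g_nonneg (d : Deck n) : 0 ≤ g d := hval_nonneg greedy_shuffler _ _

lemma sum_pos_of_ne {d : Deck n} (hd : d ≠ 0) : ∃ N, ∑ i, d i = N + 1 := by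
  have : ∑ i, d i ≠ 0 := fun h => hd (eq_zero_of_sum h)
  exact ⟨(∑ i, d i) - 1, by omega⟩

lemma g_rec {d : Deck n} (hd : d ≠ 0) :
    g d = ((supp d).card : ℝ)⁻¹ + ∑ j ∈ supp d, ((supp d).card : ℝ)⁻¹ * g (d.sub j) := by
  obtain ⟨N, hN⟩ := sum_pos_of_ne hd
  have hne := supp_nonempty hd
  rw [g, hN, hval, dif_pos hne]
  congr 1
  · rw [show (supp d).sup' hne (greedy d) = (supp d).sup' hne (fun _ => ((supp d).card : ℝ)⁻¹)
      from Finset.sup'_congr hne rfl (fun x hx => greedy_apply hx), Finset.sup'_const]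
  · refine Finset.sum_congr rfl fun j hj => ?_
    rw [greedy_apply hj]
    congr 1
    have := sum_sub_add_one (mem_supp.1 hj)
    rw [g, hval_fuel greedy N (∑ i, (d.sub j) i) (d.sub j) (by omega) le_rfl]

lemma card_supp_pos {d : Deck n} (hd : d ≠ 0) : 0 < ((supp d).card : ℝ) := by
  have := Finset.card_pos.2 (supp_nonempty hd)
  exact_mod_cast this

lemma supp_sub_of_two {d : Deck n} {j : Fin n} (hj : 2 ≤ d j) : supp (d.sub j) = supp d := by
  ext i
  simp only [mem_supp, Deck.sub]
  split_ifs with h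
  · subst h; omega
  · rfl

lemma supp_sub_of_one {d : Deck n} {j : Fin n} (hj : d j = 1) :
    supp (d.sub j) = (supp d).erase j := by
  ext i
  simp only [mem_supp, Finset.mem_erase, Deck.sub]
  split_ifs with h
  · subst h; omega
  · simp [h]

lemma g_lt_aux : ∀ N, ∀ d : Deck n, ∑ i, d i = N → ∀ j, d j ≠ 0 → g (d.sub j) < g d := by
  intro N
  induction N using Nat.strong_induction_on with
  | _ N ih =>
  intro d hd j hj
  have hdne : d ≠ 0 := fun h => hj (by rw [h]; rfl)
  have hkpos := card_supp_pos hdne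
  have hNpos : 1 ≤ N := by
    have := Finset.single_le_sum (f := d) (fun i _ => Nat.zero_le _) (Finset.mem_univ j)
    omega
  rcases Nat.lt_or_ge (d j) 2 with hj1 | hj2
  · -- d j = 1
    have hj1 : d j = 1 := by omega
    by_cases hz : d.sub j = 0
    · rw [hz, g_zero, g_rec hdne]
      have h2 : 0 ≤ ∑ i ∈ supp d, ((supp d).card : ℝ)⁻¹ * g (d.sub i) :=
        Finset.sum_nonneg fun i _ => mul_nonneg (by positivity) (g_nonneg _)
      have h3 : 0 < ((supp d).card : ℝ)⁻¹ := by positivity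
      linarith
    · have hT' : supp (d.sub j) = (supp d).erase j := supp_sub_of_one hj1
      have hT'ne : ((supp d).erase j).Nonempty := hT' ▸ supp_nonempty hz
      have hjT : j ∈ supp d := mem_supp.2 hj
      have hcard : (supp d).card = ((supp d).erase j).card + 1 := by
        rw [Finset.card_erase_of_mem hjT]
        have := Finset.card_pos.2 (supp_nonempty hdne)
        omega
      set kr : ℝ := (((supp d).erase j).card : ℝ) with hkr
      have hkrpos : 0 < kr := by
        have := Finset.card_pos.2 hT'ne
        rw [hkr]; exact_mod_cast this
      set a := g (d.sub j) with ha
      set B := ∑ i ∈ (supp d).erase j, g (d.sub i) with hB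
      set C := ∑ i ∈ (supp d).erase j, g ((d.sub j).sub i) with hC
      -- recursion for d.sub j
      have hrec : a = kr⁻¹ + kr⁻¹ * C := by
        rw [ha, g_rec hz, hT', hC, Finset.mul_sum]
      have hCB : C < B := by
        rw [hC, hB]
        refine Finset.sum_lt_sum_of_nonempty hT'ne fun i hi => ?_
        rw [sub_comm]
        refine ih (N - 1) (by omega) (d.sub i) ?_ j ?_
        · have := sum_sub_add_one (mem_supp.1 (Finset.mem_erase.1 hi).2)
          omega
        · have hij : i ≠ j := (Finset.mem_erase.1 hi).1
          simp [Deck.sub, hij.symm, hj]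
      have hgd : g d = (kr + 1)⁻¹ + (kr + 1)⁻¹ * (a + B) := by
        rw [g_rec hdne]
        have h1 : ((supp d).card : ℝ) = kr + 1 := by rw [hkr, hcard]; push_cast; ring
        rw [h1, ← Finset.sum_erase_add _ _ hjT, ← ha]
        rw [Finset.sum_congr rfl (fun i _ => rfl), ← Finset.mul_sum, ← hB]
        ring
      have hCa : kr * a = 1 + C := by
        field_simp at hrec
        linarith
      rw [hgd, show (kr + 1)⁻¹ + (kr + 1)⁻¹ * (a + B) = (1 + (a + B)) / (kr + 1) by
        field_simp, lt_div_iff₀ (by linarith)]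
      nlinarith
  · -- d j ≥ 2
    have hsupp : supp (d.sub j) = supp d := supp_sub_of_two hj2
    have hz : d.sub j ≠ 0 := by
      apply ne_zero_of_supp
      rw [hsupp]; exact supp_nonempty hdne
    rw [g_rec hdne, g_rec hz, hsupp]
    apply (add_lt_add_iff_left _).2
    refine Finset.sum_lt_sum_of_nonempty (supp_nonempty hdne) fun i hi => ?_
    apply mul_lt_mul_of_pos_left _ (by positivity)
    rw [sub_comm]
    refine ih (N - 1) (by omega) (d.sub i) ?_ j ?_
    · have := sum_sub_add_one (mem_supp.1 hi)
      omega
    · simp only [Deck.sub]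
      split_ifs <;> omega

lemma g_lt {d : Deck n} {j : Fin n} (hj : d j ≠ 0) : g (d.sub j) < g d :=
  g_lt_aux (∑ i, d i) d rfl j hj

lemma key {d : Deck n} (hd : d ≠ 0) {p : Fin n → ℝ} (_hp0 : ∀ i, 0 ≤ p i)
    (hps : ∑ j ∈ supp d, p j = 1) :
    g d ≤ (supp d).sup' (supp_nonempty hd) p + ∑ j ∈ supp d, p j * g (d.sub j) ∧
    ((supp d).sup' (supp_nonempty hd) p + ∑ j ∈ supp d, p j * g (d.sub j) = g d →
      ∀ j ∈ supp d, p j = ((supp d).card : ℝ)⁻¹) := by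
  have hk := card_supp_pos hd
  set k : ℝ := ((supp d).card : ℝ) with hkdef
  set M : ℝ := (supp d).sup' (supp_nonempty hd) p with hM
  have hrec : k * g d = 1 + ∑ j ∈ supp d, g (d.sub j) := by
    have h := g_rec hd
    rw [← Finset.mul_sum] at h
    rw [h]
    field_simp
    exact mul_div_cancel_left₀ _ hk.ne'
  have hdelta : ∑ j ∈ supp d, (g d - g (d.sub j)) = 1 := by
    rw [Finset.sum_sub_distrib, Finset.sum_const, nsmul_eq_mul]
    linarith
  have hMle : ∀ j ∈ supp d, p j ≤ M := fun j hj => Finset.le_sup' p hj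
  have hdpos : ∀ j ∈ supp d, 0 ≤ g d - g (d.sub j) := fun j hj =>
    sub_nonneg.2 (g_lt (mem_supp.1 hj)).le
  have h1 : ∑ j ∈ supp d, p j * (g d - g (d.sub j)) ≤ M := by
    calc ∑ j ∈ supp d, p j * (g d - g (d.sub j))
        ≤ ∑ j ∈ supp d, M * (g d - g (d.sub j)) :=
          Finset.sum_le_sum fun j hj =>
            mul_le_mul_of_nonneg_right (hMle j hj) (hdpos j hj)
      _ = M := by rw [← Finset.mul_sum, hdelta, mul_one]
  have expand : ∑ j ∈ supp d, p j * (g d - g (d.sub j)) =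
      g d - ∑ j ∈ supp d, p j * g (d.sub j) := by
    have : ∑ j ∈ supp d, p j * (g d - g (d.sub j)) =
        ∑ j ∈ supp d, (p j * g d - p j * g (d.sub j)) :=
      Finset.sum_congr rfl fun j _ => by ring
    rw [this, Finset.sum_sub_distrib, ← Finset.sum_mul, hps, one_mul]
  constructor
  · linarith [h1, expand]
  · intro heq j hj
    have h2 : ∑ j ∈ supp d, p j * (g d - g (d.sub j)) = M := by linarith [expand]
    have h3 : ∑ j ∈ supp d, (M - p j) * (g d - g (d.sub j)) = 0 := by
      have : ∑ j ∈ supp d, (M - p j) * (g d - g (d.sub j)) =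
          ∑ j ∈ supp d, (M * (g d - g (d.sub j)) - p j * (g d - g (d.sub j))) :=
        Finset.sum_congr rfl fun j _ => by ring
      rw [this, Finset.sum_sub_distrib, ← Finset.mul_sum, hdelta, mul_one, h2, sub_self]
    have h4 : ∀ i ∈ supp d, (M - p i) * (g d - g (d.sub i)) = 0 :=
      (Finset.sum_eq_zero_iff_of_nonneg fun i hi =>
        mul_nonneg (sub_nonneg.2 (hMle i hi)) (hdpos i hi)).1 h3
    have h5 : ∀ i ∈ supp d, p i = M := by
      intro i hi
      have hδ : 0 < g d - g (d.sub i) := sub_pos.2 (g_lt (mem_supp.1 hi))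
      have := h4 i hi
      rcases mul_eq_zero.1 this with h | h
      · linarith
      · linarith
    have hMk : M = k⁻¹ := by
      have : ∑ j ∈ supp d, p j = (supp d).card • M := by
        rw [Finset.sum_congr rfl h5, Finset.sum_const]
      rw [hps] at this
      rw [nsmul_eq_mul, ← hkdef] at this
      field_simp
      linarith
    rw [h5 j hj, hMk]

lemma filter_eq_supp (d : Deck n) : Finset.univ.filter (fun j => d j ≠ 0) = supp d := rfl

noncomputable def Gstar (S : Strat n) : Strat n := fun d i =>
  if h : (supp d).Nonempty then
    (if i = Classical.choose (Finset.exists_mem_eq_sup' h (S d)) then 1 else 0)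
  else 0

lemma Gstar_guesser (S : Strat n) : IsGuesser (Gstar S) := by
  intro d hd
  have h := supp_nonempty hd
  constructor
  · intro i
    rw [Gstar, dif_pos h]
    split <;> norm_num
  · have : ∀ i, Gstar S d i =
        if i = Classical.choose (Finset.exists_mem_eq_sup' h (S d)) then (1:ℝ) else 0 := by
      intro i; rw [Gstar, dif_pos h]
    rw [Finset.sum_congr rfl fun i _ => this i]
    simp

lemma score_Gstar (S : Strat n) : ∀ N (d : Deck n),
    scoreAux (Gstar S) S N d = hval S N d := by
  intro N
  induction N with
  | zero => intro d; rfl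
  | succ N ih =>
    intro d
    rw [scoreAux, filter_eq_supp]
    by_cases h : (supp d).Nonempty
    · rw [hval, dif_pos h]
      obtain ⟨ha1, ha2⟩ := Classical.choose_spec (Finset.exists_mem_eq_sup' h (S d))
      have hsplit : ∀ j ∈ supp d, S d j * (Gstar S d j + scoreAux (Gstar S) S N (d.sub j)) =
          (if j = Classical.choose (Finset.exists_mem_eq_sup' h (S d)) then S d j else 0)
            + S d j * hval S N (d.sub j) := by
        intro j hj
        rw [ih, Gstar, dif_pos h]
        split <;> ring
      rw [Finset.sum_congr rfl hsplit, Finset.sum_add_distrib, Finset.sum_ite_eq',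
        if_pos ha1, ← ha2]
    · rw [hval, dif_neg h, Finset.not_nonempty_iff_eq_empty.1 h, Finset.sum_empty]

lemma score_le {G S : Strat n} (hG : IsGuesser G) (hS : IsShuffler S) :
    ∀ N (d : Deck n), scoreAux G S N d ≤ hval S N d := by
  intro N
  induction N with
  | zero => intro d; exact le_rfl
  | succ N ih =>
    intro d
    rw [scoreAux, filter_eq_supp]
    by_cases h : (supp d).Nonempty
    · rw [hval, dif_pos h]
      have hdne := ne_zero_of_supp h
      set M := (supp d).sup' h (S d) with hMdef
      have hM0 : 0 ≤ M := by
        obtain ⟨j, hj⟩ := h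
        exact le_trans ((hS d hdne).1.1 j) (Finset.le_sup' _ hj)
      have hsplit : ∑ j ∈ supp d, S d j * (G d j + scoreAux G S N (d.sub j)) =
          ∑ j ∈ supp d, S d j * G d j + ∑ j ∈ supp d, S d j * scoreAux G S N (d.sub j) := by
        rw [← Finset.sum_add_distrib]
        exact Finset.sum_congr rfl fun j _ => by ring
      rw [hsplit]
      have h1 : ∑ j ∈ supp d, S d j * G d j ≤ M := by
        calc ∑ j ∈ supp d, S d j * G d j
            ≤ ∑ j ∈ supp d, M * G d j := Finset.sum_le_sum fun j hj =>
              mul_le_mul_of_nonneg_right (Finset.le_sup' _ hj) ((hG d hdne).1 j)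
          _ = M * ∑ j ∈ supp d, G d j := by rw [Finset.mul_sum]
          _ ≤ M * 1 := mul_le_mul_of_nonneg_left
              (by
                rw [← (hG d hdne).2]
                exact Finset.sum_le_sum_of_subset_of_nonneg (Finset.subset_univ _)
                  fun i _ _ => (hG d hdne).1 i) hM0
          _ = M := mul_one M
      have h2 : ∑ j ∈ supp d, S d j * scoreAux G S N (d.sub j)
          ≤ ∑ j ∈ supp d, S d j * hval S N (d.sub j) :=
        Finset.sum_le_sum fun j _ => mul_le_mul_of_nonneg_left (ih _) ((hS d hdne).1.1 j)
      linarith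
    · rw [hval, dif_neg h, Finset.not_nonempty_iff_eq_empty.1 h, Finset.sum_empty]

lemma fval_eq {S : Strat n} (hS : IsShuffler S) (d : Deck n) :
    fval S d = hval S (∑ i, d i) d := by
  apply IsGreatest.csSup_eq
  constructor
  · exact ⟨Gstar S, Gstar_guesser S, score_Gstar S _ d⟩
  · rintro x ⟨G, hG, rfl⟩
    exact score_le hG hS _ d

lemma shuffler_sum_supp {S : Strat n} (hS : IsShuffler S) {d : Deck n} (hd : d ≠ 0) :
    ∑ j ∈ supp d, S d j = 1 := by
  rw [Finset.sum_subset (Finset.subset_univ _) fun i _ hi => ?_]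
  · exact (hS d hd).1.2
  · by_contra h
    exact hi (mem_supp.2 ((hS d hd).2 i h))

lemma hval_ge_g {S : Strat n} (hS : IsShuffler S) :
    ∀ N (d : Deck n), ∑ i, d i ≤ N → g d ≤ hval S N d := by
  intro N
  induction N with
  | zero =>
    intro d h
    rw [eq_zero_of_sum (Nat.le_zero.1 h), g_zero, hval_zero]
  | succ N ih =>
    intro d hsum
    by_cases h : (supp d).Nonempty
    · rw [hval, dif_pos h]
      have hdne := ne_zero_of_supp h
      have hkey : g d ≤ (supp d).sup' h (S d) + ∑ j ∈ supp d, S d j * g (d.sub j) :=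
        (key hdne (fun i => (hS d hdne).1.1 i) (shuffler_sum_supp hS hdne)).1
      have h2 : ∑ j ∈ supp d, S d j * g (d.sub j)
          ≤ ∑ j ∈ supp d, S d j * hval S N (d.sub j) := by
        refine Finset.sum_le_sum fun j hj => mul_le_mul_of_nonneg_left ?_ ((hS d hdne).1.1 j)
        refine ih _ ?_
        have := sum_sub_add_one (mem_supp.1 hj)
        omega
      linarith [hkey, h2]
    · have hd0 : d = 0 := by
        funext i
        by_contra hi
        exact h ⟨i, mem_supp.2 hi⟩
      rw [hd0, g_zero, hval_zero]

lemma fopt_eq (d : Deck n) : fopt d = g d := by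
  apply IsLeast.csInf_eq
  constructor
  · exact ⟨greedy, greedy_shuffler, fval_eq greedy_shuffler d⟩
  · rintro x ⟨S', hS', rfl⟩
    rw [fval_eq hS']
    exact hval_ge_g hS' _ d le_rfl

lemma hval_strat_congr {S S' : Strat n} (h : ∀ e : Deck n, e ≠ 0 → S e = S' e) :
    ∀ N (e : Deck n), hval S N e = hval S' N e := by
  intro N
  induction N with
  | zero => intro e; rfl
  | succ N ih =>
    intro e
    by_cases he : (supp e).Nonempty
    · rw [hval, hval, dif_pos he, dif_pos he, h e (ne_zero_of_supp he)]
      congr 1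
      exact Finset.sum_congr rfl fun j _ => by rw [ih]
    · rw [hval, hval, dif_neg he, dif_neg he]

end CG

/-- a Shuffler strategy is a minimizing Shuffler strategy iff it is the
greedy strategy (uniform on the support) on every nonzero deck. -/
theorem stmt7 (S : ∀ n, Strat n) (hS : ∀ n, IsShuffler (S n)) :
    (∀ (n : ℕ) (d : Deck n), d ≠ 0 → fval (S n) d = fopt d) ↔
      (∀ (n : ℕ) (d : Deck n), d ≠ 0 → S n d = greedy d) := by
  constructor
  · intro h n d hd
    have H : ∀ e : Deck n, e ≠ 0 → CG.hval (S n) (∑ i, e i) e = CG.g e := by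
      intro e he
      rw [← CG.fval_eq (hS n) e, h n e he, CG.fopt_eq]
    obtain ⟨N, hN⟩ := CG.sum_pos_of_ne hd
    have hEq := H d hd
    rw [hN, CG.hval, dif_pos (CG.supp_nonempty hd)] at hEq
    have hsub : ∀ j ∈ CG.supp d, CG.hval (S n) N (d.sub j) = CG.g (d.sub j) := by
      intro j hj
      by_cases hz : d.sub j = 0
      · rw [hz, CG.hval_zero, CG.g_zero]
      · have hs := CG.sum_sub_add_one (CG.mem_supp.1 hj)
        have hNs : ∑ i, (d.sub j) i = N := by omega
        rw [← hNs]
        exact H _ hz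
    rw [Finset.sum_congr rfl (fun j hj => by rw [hsub j hj])] at hEq
    have hunif := (CG.key hd (fun i => ((hS n) d hd).1.1 i)
      (CG.shuffler_sum_supp (hS n) hd)).2 hEq
    funext i
    by_cases hi : d i ≠ 0
    · rw [greedy, if_pos hi]
      exact hunif i (CG.mem_supp.2 hi)
    · push_neg at hi
      have h0 : S n d i = 0 := by
        by_contra hne
        exact (hS n d hd).2 i hne hi
      rw [h0, greedy, if_neg (by simp [hi])]
  · intro h n d hd
    rw [CG.fval_eq (hS n) d, CG.fopt_eq,
      CG.hval_strat_congr (fun e he => h n e he) (∑ i, d i) d]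
    rfl
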